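/- arXiv:1712.03006 — 2 statements merged into one kernel-verified Lean document; each statement's English description precedes it below -/
import Mathlib

section
/- Let q ∈ ℂ× be not a root of unity and n ≥ 2. Let ℂ_q[x,y] be the quotient of the free unital associative ℂ-algebra on generators x₁,…,xₙ,y₁,…,yₙ by the two-sided ideal generated by the elements x_i x_j − q x_j x_i, q y_i y_j − y_j y_i, q x_i y_j − y_j x_i, and x_j y_i − q y_i x_j for all 1 ≤ i < j ≤ n. Then the center of ℂ_q[x,y] consists exactly of the scalar multiples of the identity: Z(ℂ_q[x,y]) = ℂ·1. -/
namespace CqXY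

/-- The generator `x_i` of the free algebra on `x₁,…,xₙ,y₁,…,yₙ`. -/
noncomputable def x {n : ℕ} (i : Fin n) : FreeAlgebra ℂ (Fin n ⊕ Fin n) :=
  FreeAlgebra.ι ℂ (Sum.inl i)

/-- The generator `y_i` of the free algebra on `x₁,…,xₙ,y₁,…,yₙ`. -/
noncomputable def y {n : ℕ} (i : Fin n) : FreeAlgebra ℂ (Fin n ⊕ Fin n) :=
  FreeAlgebra.ι ℂ (Sum.inr i)

/-- The defining relations of `ℂ_q[x,y]`: for `1 ≤ i < j ≤ n`,
`x_i x_j = q x_j x_i`, `q y_i y_j = y_j y_i`, `q x_i y_j = y_j x_i`, `x_j y_i = q y_i x_j`. -/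
inductive rel (q : ℂ) (n : ℕ) :
    FreeAlgebra ℂ (Fin n ⊕ Fin n) → FreeAlgebra ℂ (Fin n ⊕ Fin n) → Prop
  | xx : ∀ i j : Fin n, i < j → rel q n (x i * x j) (q • (x j * x i))
  | yy : ∀ i j : Fin n, i < j → rel q n (q • (y i * y j)) (y j * y i)
  | xy : ∀ i j : Fin n, i < j → rel q n (q • (x i * y j)) (y j * x i)
  | yx : ∀ i j : Fin n, i < j → rel q n (x j * y i) (q • (y i * x j))

/-- `ℂ_q[x,y]`, the quotient of the free unital associative ℂ-algebra on
`x₁,…,xₙ,y₁,…,yₙ` by the two-sided ideal generated by the relations above. -/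
abbrev Cq (q : ℂ) (n : ℕ) := RingQuot (rel q n)

end CqXY

namespace CqProof

/-! Letters and normal words -/

abbrev Ltr (n : ℕ) := Fin n ⊕ Fin n

def idx {n : ℕ} : Ltr n → Fin n := Sum.elim id id
def typ {n : ℕ} : Ltr n → Bool := Sum.elim (fun _ => false) (fun _ => true)
def mkL {n : ℕ} (b : Bool) (i : Fin n) : Ltr n := if b then Sum.inr i else Sum.inl i

@[simp] lemma idx_mkL {n : ℕ} (b : Bool) (i : Fin n) : idx (mkL b i) = i := by
  cases b <;> rfl
@[simp] lemma typ_mkL {n : ℕ} (b : Bool) (i : Fin n) : typ (mkL b i) = b := by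
  cases b <;> rfl
@[simp] lemma mkL_typ_idx {n : ℕ} (a : Ltr n) : mkL (typ a) (idx a) = a := by
  cases a <;> rfl

abbrev W (n : ℕ) := Fin n → FreeMonoid Bool

def gW {n : ℕ} (a : Ltr n) : W n := Pi.mulSingle (idx a) (FreeMonoid.of (typ a))

/-! Counting statistics and the exponent bilinear form -/

def nx (l : FreeMonoid Bool) : ℤ := l.toList.count false
def ny (l : FreeMonoid Bool) : ℤ := l.toList.count true
def ln (l : FreeMonoid Bool) : ℤ := l.toList.length

def Bg (u v : FreeMonoid Bool) : ℤ := ny u * ln v + nx u * (ny v - nx v)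

@[simp] lemma Bg_one_left (v : FreeMonoid Bool) : Bg 1 v = 0 := by
  simp [Bg, nx, ny]
@[simp] lemma Bg_one_right (u : FreeMonoid Bool) : Bg u 1 = 0 := by
  simp [Bg, nx, ny, ln]

lemma Bg_mul_left (u u' v : FreeMonoid Bool) : Bg (u * u') v = Bg u v + Bg u' v := by
  simp only [Bg, nx, ny, ln, FreeMonoid.toList_mul, List.count_append]
  push_cast; ring

lemma Bg_mul_right (u v v' : FreeMonoid Bool) : Bg u (v * v') = Bg u v + Bg u v' := by
  simp only [Bg, nx, ny, ln, FreeMonoid.toList_mul, List.count_append, List.length_append]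
  push_cast; ring

lemma Bg_of_of (a b : Bool) : Bg (FreeMonoid.of a) (FreeMonoid.of b)
    = if a = false ∧ b = false then -1 else 1 := by
  cases a <;> cases b <;> simp [Bg, nx, ny, ln, FreeMonoid.toList_of]

def ee {n : ℕ} (u v : W n) : ℤ :=
  ∑ j : Fin n, ∑ i : Fin n, if i < j then Bg (u j) (v i) else 0

@[simp] lemma ee_one_left {n : ℕ} (v : W n) : ee (1 : W n) v = 0 := by
  simp [ee, Pi.one_apply]
@[simp] lemma ee_one_right {n : ℕ} (u : W n) : ee u (1 : W n) = 0 := by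
  simp [ee, Pi.one_apply]

lemma ee_mul_left {n : ℕ} (u u' v : W n) : ee (u * u') v = ee u v + ee u' v := by
  simp only [ee, Pi.mul_apply, Bg_mul_left, ← Finset.sum_add_distrib]
  refine Finset.sum_congr rfl fun j _ => Finset.sum_congr rfl fun i _ => ?_
  split <;> simp

lemma ee_mul_right {n : ℕ} (u v v' : W n) : ee u (v * v') = ee u v + ee u v' := by
  simp only [ee, Pi.mul_apply, Bg_mul_right, ← Finset.sum_add_distrib]
  refine Finset.sum_congr rfl fun j _ => Finset.sum_congr rfl fun i _ => ?_
  split <;> simp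

lemma ee_single_left {n : ℕ} (i0 : Fin n) (s : FreeMonoid Bool) (v : W n) :
    ee (Pi.mulSingle i0 s) v = ∑ i : Fin n, if i < i0 then Bg s (v i) else 0 := by
  rw [ee, Finset.sum_eq_single i0]
  · simp
  · intro j _ hj
    simp [Pi.mulSingle_eq_of_ne hj]
  · simp

lemma ee_single_right {n : ℕ} (i0 : Fin n) (s : FreeMonoid Bool) (u : W n) :
    ee u (Pi.mulSingle i0 s) = ∑ j : Fin n, if i0 < j then Bg (u j) s else 0 := by
  rw [ee]
  refine Finset.sum_congr rfl fun j _ => ?_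
  rw [Finset.sum_eq_single i0]
  · simp
  · intro i _ hi
    simp [Pi.mulSingle_eq_of_ne hi]
  · simp

lemma ee_g_g {n : ℕ} (a b : Ltr n) :
    ee (gW a) (gW b) = if idx b < idx a then Bg (FreeMonoid.of (typ a)) (FreeMonoid.of (typ b)) else 0 := by
  rw [gW, gW, ee_single_left, Finset.sum_eq_single (idx b)]
  · simp
  · intro i _ hi
    simp [Pi.mulSingle_eq_of_ne hi]
  · simp

lemma ee_g_left {n : ℕ} (a : Ltr n) (w : W n) :
    ee (gW a) w = ∑ i : Fin n, if i < idx a then Bg (FreeMonoid.of (typ a)) (w i) else 0 :=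
  ee_single_left _ _ _

lemma gW_comm {n : ℕ} {a b : Ltr n} (h : idx a ≠ idx b) : gW a * gW b = gW b * gW a :=
  (Pi.mulSingle_commute h _ _).eq


/-! The twisted regular representation -/

abbrev V (n : ℕ) := W n →₀ ℂ

variable {n : ℕ} (q : ℂ)

noncomputable def Lop (u : W n) : Module.End ℂ (V n) :=
  Finsupp.lift (V n) ℂ (W n) fun w => q ^ ee u w • Finsupp.single (u * w) (1 : ℂ)

noncomputable def Rop (v : W n) : Module.End ℂ (V n) :=
  Finsupp.lift (V n) ℂ (W n) fun w => q ^ ee w v • Finsupp.single (w * v) (1 : ℂ)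

lemma Lop_single (u w : W n) (c : ℂ) :
    Lop q u (Finsupp.single w c) = (c * q ^ ee u w) • Finsupp.single (u * w) (1 : ℂ) := by
  rw [Lop, Finsupp.lift_apply, Finsupp.sum_single_index] <;> simp [smul_smul]

lemma Rop_single (v w : W n) (c : ℂ) :
    Rop q v (Finsupp.single w c) = (c * q ^ ee w v) • Finsupp.single (w * v) (1 : ℂ) := by
  rw [Rop, Finsupp.lift_apply, Finsupp.sum_single_index] <;> simp [smul_smul]

lemma Lop_mul (hq0 : q ≠ 0) (u v : W n) :
    Lop q u * Lop q v = q ^ ee u v • Lop q (u * v) := by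
  refine Finsupp.lhom_ext fun w c => ?_
  rw [Module.End.mul_apply, Lop_single, map_smul, Lop_single,
    LinearMap.smul_apply, Lop_single]
  rw [smul_smul, smul_smul, ← mul_assoc u v w, ee_mul_right, ee_mul_left,
    zpow_add₀ hq0, zpow_add₀ hq0]
  ring_nf

lemma Lop_Rop_comm (hq0 : q ≠ 0) (u v : W n) :
    Lop q u * Rop q v = Rop q v * Lop q u := by
  refine Finsupp.lhom_ext fun w c => ?_
  rw [Module.End.mul_apply, Module.End.mul_apply, Rop_single, Lop_single,
    map_smul, map_smul, Lop_single, Rop_single]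
  rw [smul_smul, smul_smul, mul_assoc u w v, ee_mul_right, ee_mul_left,
    zpow_add₀ hq0, zpow_add₀ hq0]
  ring_nf


/-! The Cq side: generators, straightening -/

open CqXY

noncomputable def gen (a : Ltr n) : Cq q n :=
  RingQuot.mkAlgHom ℂ (rel q n) (FreeAlgebra.ι ℂ a)

lemma gen_swap (hq0 : q ≠ 0) (a b : Ltr n) (h : idx b < idx a) :
    gen q a * gen q b
      = q ^ Bg (FreeMonoid.of (typ a)) (FreeMonoid.of (typ b)) • (gen q b * gen q a) := by
  cases a with
  | inl j =>
    cases b with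
    | inl i =>
      have h1 := RingQuot.mkAlgHom_rel ℂ (rel.xx (q := q) i j h)
      simp only [CqXY.x, map_mul, map_smul] at h1
      have hB : Bg (FreeMonoid.of (typ (Sum.inl j : Ltr n)))
          (FreeMonoid.of (typ (Sum.inl i : Ltr n))) = -1 := by simp [typ, Bg_of_of]
      rw [hB, zpow_neg_one]
      simp only [gen]
      rw [h1, smul_smul, inv_mul_cancel₀ hq0, one_smul]
    | inr i =>
      have h1 := RingQuot.mkAlgHom_rel ℂ (rel.yx (q := q) i j h)
      simp only [CqXY.x, CqXY.y, map_mul, map_smul] at h1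
      have hB : Bg (FreeMonoid.of (typ (Sum.inl j : Ltr n)))
          (FreeMonoid.of (typ (Sum.inr i : Ltr n))) = 1 := by simp [typ, Bg_of_of]
      rw [hB, zpow_one]
      simpa [gen] using h1
  | inr j =>
    cases b with
    | inl i =>
      have h1 := RingQuot.mkAlgHom_rel ℂ (rel.xy (q := q) i j h)
      simp only [CqXY.x, CqXY.y, map_mul, map_smul] at h1
      have hB : Bg (FreeMonoid.of (typ (Sum.inr j : Ltr n)))
          (FreeMonoid.of (typ (Sum.inl i : Ltr n))) = 1 := by simp [typ, Bg_of_of]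
      rw [hB, zpow_one]
      simpa [gen] using h1.symm
    | inr i =>
      have h1 := RingQuot.mkAlgHom_rel ℂ (rel.yy (q := q) i j h)
      simp only [CqXY.y, map_mul, map_smul] at h1
      have hB : Bg (FreeMonoid.of (typ (Sum.inr j : Ltr n)))
          (FreeMonoid.of (typ (Sum.inr i : Ltr n))) = 1 := by simp [typ, Bg_of_of]
      rw [hB, zpow_one]
      simpa [gen] using h1.symm

noncomputable def wordAtL (i : Fin n) (l : List Bool) : Cq q n :=
  (l.map fun b => gen q (mkL b i)).prod

@[simp] lemma wordAtL_nil (i : Fin n) : wordAtL q i [] = 1 := rfl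

lemma wordAtL_cons (i : Fin n) (b : Bool) (t : List Bool) :
    wordAtL q i (b :: t) = gen q (mkL b i) * wordAtL q i t := by
  simp [wordAtL]

/-- Pass a generator to the right past a word in a strictly lower component. -/
lemma gen_pass (hq0 : q ≠ 0) (a : Ltr n) (j : Fin n) (hj : j < idx a) (l : List Bool) :
    gen q a * wordAtL q j l
      = q ^ Bg (FreeMonoid.of (typ a)) (FreeMonoid.ofList l) • (wordAtL q j l * gen q a) := by
  induction l with
  | nil => simp
  | cons b t ih =>
    rw [wordAtL_cons, ← mul_assoc,
      gen_swap q hq0 a (mkL b j) (by simpa using hj)]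
    rw [smul_mul_assoc, mul_assoc, ih, mul_smul_comm, smul_smul,
      FreeMonoid.ofList_cons, Bg_mul_right, zpow_add₀ hq0, typ_mkL, ← mul_assoc]

noncomputable def prodW (js : List (Fin n)) (w : W n) : Cq q n :=
  (js.map fun j => wordAtL q j (w j).toList).prod

lemma prodW_nil (w : W n) : prodW q [] w = 1 := rfl

lemma prodW_cons (j : Fin n) (t : List (Fin n)) (w : W n) :
    prodW q (j :: t) w = wordAtL q j (w j).toList * prodW q t w := by
  simp [prodW]

lemma gen_mul_prodW (hq0 : q ≠ 0) (a : Ltr n) (w : W n) :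
    ∀ js : List (Fin n), js.Pairwise (· < ·) → idx a ∈ js →
    gen q a * prodW q js w
      = q ^ ((js.map fun j => if j < idx a
            then Bg (FreeMonoid.of (typ a)) (w j) else 0).sum) • prodW q js (gW a * w) := by
  intro js
  induction js with
  | nil => intro _ hm; exact absurd hm List.not_mem_nil
  | cons j t ih =>
    intro hp hm
    have hpt : t.Pairwise (· < ·) := hp.of_cons
    have hjt : ∀ x ∈ t, j < x := fun x hx => List.rel_of_pairwise_cons hp hx
    rcases List.mem_cons.mp hm with rfl | hmt
    · -- head is idx a : prepend the letter here
      have hw : (gW a * w) (idx a) = FreeMonoid.of (typ a) * w (idx a) := by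
        simp [gW, Pi.mul_apply]
      have hrest : prodW q t (gW a * w) = prodW q t w := by
        unfold prodW
        refine congrArg _ (List.map_congr_left fun x hx => ?_)
        have hx1 : (gW a * w) x = w x := by
          have hxne : idx a ≠ x := ne_of_lt (hjt x hx)
          simp [gW, Pi.mul_apply, Pi.mulSingle_eq_of_ne hxne.symm]
        rw [hx1]
      have hsum : ((idx a :: t).map fun j' => if j' < idx a
          then Bg (FreeMonoid.of (typ a)) (w j') else 0).sum = 0 := by
        rw [List.map_cons, List.sum_cons, if_neg (lt_irrefl _), zero_add]
        refine List.sum_eq_zero fun z hz => ?_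
        obtain ⟨j', hj', rfl⟩ := List.mem_map.mp hz
        rw [if_neg (not_lt.mpr (hjt _ hj').le)]
      rw [prodW_cons, prodW_cons, hsum, zpow_zero, one_smul, hrest, hw, ← mul_assoc]
      congr 1
      rw [show FreeMonoid.of (typ a) * w (idx a)
          = FreeMonoid.ofList (typ a :: (w (idx a)).toList) from by
        rw [FreeMonoid.ofList_cons, FreeMonoid.ofList_toList]]
      rw [FreeMonoid.toList_ofList, wordAtL_cons, mkL_typ_idx]
    · -- head j < idx a : pass through
      have hja : j < idx a := hjt _ hmt
      have hwj : (gW a * w) j = w j := by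
        simp [gW, Pi.mul_apply, Pi.mulSingle_eq_of_ne (ne_of_lt hja)]
      rw [prodW_cons, prodW_cons, hwj, ← mul_assoc,
        gen_pass q hq0 a j hja, smul_mul_assoc, mul_assoc, ih hpt hmt, mul_smul_comm,
        smul_smul, ← zpow_add₀ hq0]
      rw [List.map_cons, List.sum_cons, if_pos hja, FreeMonoid.ofList_toList]

/-! The normal monomial map ψ -/

noncomputable def mono (w : W n) : Cq q n := prodW q (List.finRange n) w

lemma mono_one : mono q (1 : W n) = 1 := by
  unfold mono prodW
  refine List.prod_eq_one fun z hz => ?_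
  obtain ⟨j, _, rfl⟩ := List.mem_map.mp hz
  simp [Pi.one_apply, FreeMonoid.toList_one]

lemma gen_mul_mono (hq0 : q ≠ 0) (a : Ltr n) (w : W n) :
    gen q a * mono q w = q ^ ee (gW a) w • mono q (gW a * w) := by
  rw [mono, mono, gen_mul_prodW q hq0 a w _ (List.pairwise_lt_finRange n) (List.mem_finRange _)]
  congr 2
  rw [ee_g_left, Fin.sum_univ_def]

noncomputable def psi : V n →ₗ[ℂ] Cq q n := Finsupp.lift (Cq q n) ℂ (W n) (mono q)

lemma psi_single (w : W n) (c : ℂ) : psi q (Finsupp.single w c) = c • mono q w := by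
  rw [psi, Finsupp.lift_apply, Finsupp.sum_single_index] <;> simp

/-! The representation φ -/

noncomputable def Ffree : FreeAlgebra ℂ (Ltr n) →ₐ[ℂ] Module.End ℂ (V n) :=
  FreeAlgebra.lift ℂ fun a => Lop q (gW a)

lemma ee_gg_lo (a b : Ltr n) (h : idx a < idx b) : ee (gW a) (gW b) = 0 := by
  rw [ee_g_g, if_neg (not_lt.mpr h.le)]

lemma ee_gg_hi (a b : Ltr n) (h : idx b < idx a) :
    ee (gW a) (gW b) = Bg (FreeMonoid.of (typ a)) (FreeMonoid.of (typ b)) := by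
  rw [ee_g_g, if_pos h]

lemma Ffree_rel (hq0 : q ≠ 0) : ∀ ⦃a b⦄, rel q n a b → Ffree q a = Ffree q b := by
  intro a b h
  cases h with
  | xx i j hij =>
    simp only [CqXY.x, map_mul, map_smul, Ffree, FreeAlgebra.lift_ι_apply]
    rw [Lop_mul q hq0, Lop_mul q hq0,
      ee_gg_lo (Sum.inl i) (Sum.inl j) hij, ee_gg_hi (Sum.inl j) (Sum.inl i) hij,
      gW_comm (show idx (Sum.inl j : Ltr n) ≠ idx (Sum.inl i) from ne_of_gt hij)]
    have hB : Bg (FreeMonoid.of (typ (Sum.inl j : Ltr n)))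
        (FreeMonoid.of (typ (Sum.inl i : Ltr n))) = -1 := by simp [typ, Bg_of_of]
    rw [hB, zpow_zero, one_smul, zpow_neg_one, smul_smul, mul_inv_cancel₀ hq0, one_smul]
  | yy i j hij =>
    simp only [CqXY.y, map_mul, map_smul, Ffree, FreeAlgebra.lift_ι_apply]
    rw [Lop_mul q hq0, Lop_mul q hq0,
      ee_gg_lo (Sum.inr i) (Sum.inr j) hij, ee_gg_hi (Sum.inr j) (Sum.inr i) hij,
      gW_comm (show idx (Sum.inr j : Ltr n) ≠ idx (Sum.inr i) from ne_of_gt hij)]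
    have hB : Bg (FreeMonoid.of (typ (Sum.inr j : Ltr n)))
        (FreeMonoid.of (typ (Sum.inr i : Ltr n))) = 1 := by simp [typ, Bg_of_of]
    rw [hB, zpow_zero, zpow_one, smul_smul, mul_one]
  | xy i j hij =>
    simp only [CqXY.x, CqXY.y, map_mul, map_smul, Ffree, FreeAlgebra.lift_ι_apply]
    rw [Lop_mul q hq0, Lop_mul q hq0,
      ee_gg_lo (Sum.inl i) (Sum.inr j) hij, ee_gg_hi (Sum.inr j) (Sum.inl i) hij,
      gW_comm (show idx (Sum.inr j : Ltr n) ≠ idx (Sum.inl i) from ne_of_gt hij)]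
    have hB : Bg (FreeMonoid.of (typ (Sum.inr j : Ltr n)))
        (FreeMonoid.of (typ (Sum.inl i : Ltr n))) = 1 := by simp [typ, Bg_of_of]
    rw [hB, zpow_zero, zpow_one, smul_smul, mul_one]
  | yx i j hij =>
    simp only [CqXY.x, CqXY.y, map_mul, map_smul, Ffree, FreeAlgebra.lift_ι_apply]
    rw [Lop_mul q hq0, Lop_mul q hq0,
      ee_gg_lo (Sum.inr i) (Sum.inl j) hij, ee_gg_hi (Sum.inl j) (Sum.inr i) hij,
      gW_comm (show idx (Sum.inl j : Ltr n) ≠ idx (Sum.inr i) from ne_of_gt hij)]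
    have hB : Bg (FreeMonoid.of (typ (Sum.inl j : Ltr n)))
        (FreeMonoid.of (typ (Sum.inr i : Ltr n))) = 1 := by simp [typ, Bg_of_of]
    rw [hB, zpow_zero, zpow_one, smul_smul, mul_one]

noncomputable def phi (hq0 : q ≠ 0) : Cq q n →ₐ[ℂ] Module.End ℂ (V n) :=
  RingQuot.liftAlgHom ℂ ⟨Ffree q, Ffree_rel q hq0⟩

lemma phi_mk_ι (hq0 : q ≠ 0) (a : Ltr n) :
    phi q hq0 (RingQuot.mkAlgHom ℂ (rel q n) (FreeAlgebra.ι ℂ a)) = Lop q (gW a) := by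
  rw [phi, RingQuot.liftAlgHom_mkAlgHom_apply, Ffree, FreeAlgebra.lift_ι_apply]

lemma phi_gen (hq0 : q ≠ 0) (a : Ltr n) : phi q hq0 (gen q a) = Lop q (gW a) :=
  phi_mk_ι q hq0 a

lemma phi_Rop_comm (hq0 : q ≠ 0) (z : Cq q n) (v : W n) :
    phi q hq0 z * Rop q v = Rop q v * phi q hq0 z := by
  obtain ⟨a, rfl⟩ := RingQuot.mkAlgHom_surjective ℂ (rel q n) z
  induction a using FreeAlgebra.induction with
  | grade0 r =>
    rw [AlgHom.commutes, AlgHom.commutes]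
    exact Algebra.commutes r _
  | grade1 a =>
    rw [phi_mk_ι q hq0 a]
    exact Lop_Rop_comm q hq0 _ v
  | mul a b ha hb =>
    rw [map_mul, map_mul, mul_assoc, hb, ← mul_assoc, ha, mul_assoc]
  | add a b ha hb =>
    rw [map_add, map_add, add_mul, mul_add, ha, hb]

lemma gen_def (a : Ltr n) :
    RingQuot.mkAlgHom ℂ (rel q n) (FreeAlgebra.ι ℂ a) = gen q a := rfl

lemma psi_phi_apply (hq0 : q ≠ 0) (a : FreeAlgebra ℂ (Ltr n)) :
    ∀ vv : V n, psi q (phi q hq0 (RingQuot.mkAlgHom ℂ (rel q n) a) vv)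
      = RingQuot.mkAlgHom ℂ (rel q n) a * psi q vv := by
  induction a using FreeAlgebra.induction with
  | grade0 r =>
    intro vv
    rw [AlgHom.commutes, AlgHom.commutes, Module.algebraMap_end_apply,
      map_smul, Algebra.smul_def]
  | grade1 a =>
    intro vv
    rw [phi_mk_ι q hq0 a, gen_def]
    induction vv using Finsupp.induction_linear with
    | zero => simp
    | add g1 g2 hg1 hg2 => rw [map_add, map_add, map_add, mul_add, hg1, hg2]
    | single w c =>
      rw [Lop_single, map_smul, psi_single, psi_single, one_smul, mul_smul_comm,
        gen_mul_mono q hq0, smul_smul, mul_comm c]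
  | mul a b ha hb =>
    intro vv
    rw [map_mul, map_mul, Module.End.mul_apply, ha, hb, mul_assoc]
  | add a b ha hb =>
    intro vv
    rw [map_add, map_add, LinearMap.add_apply, map_add, add_mul, ha, hb]

lemma psi_phi (hq0 : q ≠ 0) (z : Cq q n) :
    psi q (phi q hq0 z (Finsupp.single 1 1)) = z := by
  obtain ⟨a, rfl⟩ := RingQuot.mkAlgHom_surjective ℂ (rel q n) z
  rw [psi_phi_apply q hq0 a, psi_single, mono_one, one_smul, mul_one]

/-! The center argument -/

theorem center_le_bot (hq0 : q ≠ 0) :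
    Subalgebra.center ℂ (Cq q n) ≤ ⊥ := by
  intro z hz
  have hzc : ∀ b : Cq q n, b * z = z * b := Subalgebra.mem_center_iff.mp hz
  have hfdef : True := trivial
  set f : V n := phi q hq0 z (Finsupp.single 1 1) with hf
  have key : ∀ a : Ltr n, Lop q (gW a) f = Rop q (gW a) f := by
    intro a
    have hEnd := congrArg (phi q hq0) (hzc (gen q a))
    rw [map_mul, map_mul, phi_gen q hq0 a] at hEnd
    have hδ : Lop q (gW a) (Finsupp.single (1 : W n) 1)
        = Finsupp.single (gW a) (1 : ℂ) := by
      rw [Lop_single, ee_one_right, zpow_zero, mul_one, mul_one, one_smul]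
    have hδ' : Rop q (gW a) (Finsupp.single (1 : W n) 1)
        = Finsupp.single (gW a) (1 : ℂ) := by
      rw [Rop_single, ee_one_left, zpow_zero, mul_one, one_mul, one_smul]
    have h1 : Lop q (gW a) f = phi q hq0 z (Finsupp.single (gW a) (1 : ℂ)) := by
      have h := DFunLike.congr_fun hEnd (Finsupp.single (1 : W n) 1)
      rw [Module.End.mul_apply, Module.End.mul_apply, hδ] at h
      exact h
    have h2 : phi q hq0 z (Finsupp.single (gW a) (1 : ℂ)) = Rop q (gW a) f := by
      have h := DFunLike.congr_fun (phi_Rop_comm q hq0 z (gW a))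
        (Finsupp.single (1 : W n) 1)
      rw [Module.End.mul_apply, Module.End.mul_apply, hδ'] at h
      exact h
    rw [h1, h2]
  have hsupp : f.support ⊆ {1} := by
    intro w₀ hw₀
    rw [Finset.mem_singleton]
    by_contra hne
    have hfw₀ : f w₀ ≠ 0 := Finsupp.mem_support_iff.mp hw₀
    obtain ⟨j, hj⟩ : ∃ j, w₀ j ≠ 1 := by
      by_contra hall
      push_neg at hall
      exact hne (funext hall)
    have hhead : ∀ b : Bool, (w₀ j).toList.head? = some b := by
      intro b
      have hk := key (mkL b j)
      have hRval : (Rop q (gW (mkL b j)) f) (w₀ * gW (mkL b j))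
          = f w₀ * q ^ ee w₀ (gW (mkL b j)) := by
        rw [Rop, Finsupp.lift_apply, Finsupp.sum_apply, Finsupp.sum,
          Finset.sum_eq_single w₀]
        · rw [Finsupp.smul_apply, Finsupp.smul_apply, Finsupp.single_eq_same,
            smul_eq_mul, smul_eq_mul, mul_one]
        · intro w _ hwne
          have hne2 : w * gW (mkL b j) ≠ w₀ * gW (mkL b j) :=
            fun hcon => hwne (mul_right_cancel hcon)
          rw [Finsupp.smul_apply, Finsupp.smul_apply,
            Finsupp.single_eq_of_ne' hne2, smul_eq_mul, smul_eq_mul,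
            mul_zero, mul_zero]
        · intro hcon; exact absurd hw₀ hcon
      have hLne : (Lop q (gW (mkL b j)) f) (w₀ * gW (mkL b j)) ≠ 0 := by
        rw [hk, hRval]
        exact mul_ne_zero hfw₀ (zpow_ne_zero _ hq0)
      have hex : ∃ w ∈ f.support, gW (mkL b j) * w = w₀ * gW (mkL b j) := by
        by_contra hcon
        push_neg at hcon
        apply hLne
        rw [Lop, Finsupp.lift_apply, Finsupp.sum_apply, Finsupp.sum]
        refine Finset.sum_eq_zero fun w hw => ?_
        rw [Finsupp.smul_apply, Finsupp.smul_apply,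
          Finsupp.single_eq_of_ne' (hcon w hw), smul_eq_mul, smul_eq_mul,
          mul_zero, mul_zero]
      obtain ⟨w, _, hww⟩ := hex
      have hcomp := congrFun hww j
      rw [Pi.mul_apply, Pi.mul_apply] at hcomp
      have hgj : gW (mkL b j) j = FreeMonoid.of b := by
        rw [gW, idx_mkL, typ_mkL, Pi.mulSingle_eq_same]
      rw [hgj] at hcomp
      have hlist := congrArg FreeMonoid.toList hcomp
      rw [FreeMonoid.toList_mul, FreeMonoid.toList_mul, FreeMonoid.toList_of] at hlist
      have hnil : (w₀ j).toList ≠ [] := by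
        intro hc
        apply hj
        have h := congrArg FreeMonoid.ofList hc
        rwa [FreeMonoid.ofList_toList] at h
      cases hl : (w₀ j).toList with
      | nil => exact absurd hl hnil
      | cons hd tl =>
        rw [hl, List.cons_append] at hlist
        have hbd : b = hd := (List.cons.inj hlist).1
        rw [List.head?_cons]
        exact congrArg some hbd.symm
    have h1 := hhead false
    have h2 := hhead true
    rw [h1] at h2
    exact Bool.noConfusion (Option.some.inj h2)
  have hfs : f = Finsupp.single 1 (f 1) := Finsupp.support_subset_singleton.mp hsupp
  rw [Algebra.mem_bot]
  refine ⟨f (1 : W n), ?_⟩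
  have h1 := psi_phi q hq0 z
  rw [← hf] at h1
  rw [← h1, hfs, psi_single, mono_one, Finsupp.single_eq_same, Algebra.algebraMap_eq_smul_one]

end CqProof

open CqXY in
/-- for `q` not a root of unity and `n ≥ 2`, the center of `ℂ_q[x,y]`
consists exactly of the scalar multiples of the identity. -/
theorem center_CqXY_trivial (n : ℕ) (hn : 2 ≤ n)
    (q : ℂ) (hq0 : q ≠ 0) (hq : ∀ k : ℕ, 0 < k → q ^ k ≠ 1) :
    Subalgebra.center ℂ (Cq q n) = ⊥ := by
  exact le_antisymm (CqProof.center_le_bot q hq0) bot_le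
end

section
/- Let q ∈ ℂ× be not a root of unity, and let t, s ∈ ℂ× (playing the roles of q^λ and q^μ). Set [λ]_q = (t − t⁻¹)/(q − q⁻¹), [μ]_q = (s − s⁻¹)/(q − q⁻¹), and for integers m, k define [λ − m]_q = (tq^{−m} − t⁻¹q^{m})/(q − q⁻¹) and [μ − k]_q = (sq^{−k} − s⁻¹q^{k})/(q − q⁻¹). On ℂ[x,y] consider the operator Ê_{λ,μ} = (t·x·∂_{q,x}² − [λ]_q·γ_{q,x}·∂_{q,x})·s·γ_{q,y}⁻² + s·y·∂_{q,y}² − [μ]_q·γ_{q,y}·∂_{q,y} (the action of E on the tensor product M_q(λω) ⊗ M_q(μω)). Then: (1) a vector v = Σ_{k=0}^n a_k x^{n−k} y^k (a_k ∈ ℂ) satisfies Ê_{λ,μ} v = 0 if and only if a_k·[k]_q·[μ−k+1]_q + a_{k−1}·s·q^{2−2k}·[n−k+1]_q·[λ−n+k]_q = 0 for all k = 1,…,n; (2) if moreover t² ∉ {q^{2m} : m ∈ ℕ₀} or s² ∉ {q^{2m} : m ∈ ℕ₀}, then for each n ∈ ℕ₀ the space of vectors v = Σ_{k=0}^n a_k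 x^{n−k} y^k with Ê_{λ,μ} v = 0 is exactly one-dimensional. -/
open MvPolynomial

/-- The `q`-integer `[m]_q = (q^m − q^{−m})/(q − q^{−1})`. -/
noncomputable def qNum (q : ℂ) (m : ℕ) : ℂ := (q ^ m - q⁻¹ ^ m) / (q - q⁻¹)

/-- `[λ − m]_q = (t·q^{−m} − t⁻¹·q^{m})/(q − q⁻¹)`, where `t` plays the role of `q^λ`. -/
noncomputable def qWt (q t : ℂ) (m : ℤ) : ℂ := (t * q ^ (-m) - t⁻¹ * q ^ m) / (q - q⁻¹)

/-- `γ_{q,u}`: scales a monomial by `q` raised to its `u`-degree. -/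
noncomputable def gammaOp {σ : Type*} (q : ℂ) (u : σ) : Module.End ℂ (MvPolynomial σ ℂ) :=
  (basisMonomials σ ℂ).constr ℂ fun m => q ^ (m u) • monomial m 1

/-- `∂_{q,u}`: sends a monomial with `u`-degree `m` to `[m]_q` times the monomial with
`u`-degree `m − 1` (zero if `m = 0`). -/
noncomputable def delOp {σ : Type*} [DecidableEq σ] (q : ℂ) (u : σ) :
    Module.End ℂ (MvPolynomial σ ℂ) :=
  (basisMonomials σ ℂ).constr ℂ fun m => qNum q (m u) • monomial (m - Finsupp.single u 1) 1

/-- Multiplication by the variable `u`. -/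
noncomputable def mulOp {σ : Type*} (u : σ) : Module.End ℂ (MvPolynomial σ ℂ) :=
  LinearMap.mulLeft ℂ (X u)

namespace Stmt19

/- `ℂ[x,y] = MvPolynomial (Fin 2) ℂ`, with `x = X 0`, `y = X 1`. -/

/-- `Ê_{λ,μ} = (t·x·∂_{q,x}² − [λ]_q·γ_{q,x}·∂_{q,x})·s·γ_{q,y}⁻² + s·y·∂_{q,y}² − [μ]_q·γ_{q,y}·∂_{q,y}`,
the action of `E` on `M_q(λω) ⊗ M_q(μω)`, where `t = q^λ`, `s = q^μ`. -/
noncomputable def Ehat (q t s : ℂ) : Module.End ℂ (MvPolynomial (Fin 2) ℂ) :=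
  (t • (mulOp 0 * delOp q 0 ^ 2) - ((t - t⁻¹) / (q - q⁻¹)) • (gammaOp q 0 * delOp q 0))
      * (s • gammaOp q⁻¹ 1 ^ 2)
    + s • (mulOp 1 * delOp q 1 ^ 2)
    - ((s - s⁻¹) / (q - q⁻¹)) • (gammaOp q 1 * delOp q 1)

/-- The span of the monomials `x^{n−k} y^k`, `k = 0,…,n`. -/
noncomputable def Vn (n : ℕ) : Submodule ℂ (MvPolynomial (Fin 2) ℂ) :=
  Submodule.span ℂ {f : MvPolynomial (Fin 2) ℂ | ∃ k : ℕ, k ≤ n ∧ f = X 0 ^ (n - k) * X 1 ^ k}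

end Stmt19

-- basic lemmas
lemma gammaOp_monomial {σ : Type*} (q : ℂ) (u : σ) (m : σ →₀ ℕ) :
    gammaOp q u (monomial m (1:ℂ)) = q ^ (m u) • monomial m 1 := by
  have h : monomial m (1:ℂ) = basisMonomials σ ℂ m := by rw [coe_basisMonomials]
  rw [gammaOp, h, Module.Basis.constr_basis, h]

lemma delOp_monomial {σ : Type*} [DecidableEq σ] (q : ℂ) (u : σ) (m : σ →₀ ℕ) :
    delOp q u (monomial m (1:ℂ)) = qNum q (m u) • monomial (m - Finsupp.single u 1) 1 := by
  have h : monomial m (1:ℂ) = basisMonomials σ ℂ m := by rw [coe_basisMonomials]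
  rw [delOp, h, Module.Basis.constr_basis]

lemma qNum_zero (q : ℂ) : qNum q 0 = 0 := by simp [qNum]

namespace Stmt19

/-- exponent of `x^i y^j` -/
noncomputable def e (i j : ℕ) : Fin 2 →₀ ℕ := Finsupp.single 0 i + Finsupp.single 1 j

lemma e_apply0 (i j : ℕ) : e i j 0 = i := by simp [e, Finsupp.single_apply]
lemma e_apply1 (i j : ℕ) : e i j 1 = j := by simp [e, Finsupp.single_apply]

lemma e_inj {i j i' j' : ℕ} (h : e i j = e i' j') : i = i' ∧ j = j' := by
  constructor
  · have := DFunLike.congr_fun h 0; simpa [e_apply0] using this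
  · have := DFunLike.congr_fun h 1; simpa [e_apply1] using this

lemma e_sub0 (i j : ℕ) : e (i+1) j - Finsupp.single 0 1 = e i j := by
  ext a; fin_cases a <;>
    simp [e, Finsupp.tsub_apply, Finsupp.single_apply, Finsupp.add_apply]

lemma e_sub1 (i j : ℕ) : e i (j+1) - Finsupp.single 1 1 = e i j := by
  ext a; fin_cases a <;>
    simp [e, Finsupp.tsub_apply, Finsupp.single_apply, Finsupp.add_apply]

lemma X_pow_mul_eq (a b : ℕ) : (X 0 ^ a * X 1 ^ b : MvPolynomial (Fin 2) ℂ) = monomial (e a b) 1 := by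
  rw [X_pow_eq_monomial, X_pow_eq_monomial, monomial_mul, one_mul, e]

lemma X0_mul_mono (i j : ℕ) :
    (X 0 : MvPolynomial (Fin 2) ℂ) * monomial (e i j) 1 = monomial (e (i+1) j) 1 := by
  have h : Finsupp.single (0 : Fin 2) 1 + e i j = e (i+1) j := by
    ext a; fin_cases a <;> simp [e, Finsupp.single_apply, Finsupp.add_apply] <;> omega
  rw [X, monomial_mul, one_mul, h]

lemma X1_mul_mono (i j : ℕ) :
    (X 1 : MvPolynomial (Fin 2) ℂ) * monomial (e i j) 1 = monomial (e i (j+1)) 1 := by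
  have h : Finsupp.single (1 : Fin 2) 1 + e i j = e i (j+1) := by
    ext a; fin_cases a <;> simp [e, Finsupp.single_apply, Finsupp.add_apply] <;> omega
  rw [X, monomial_mul, one_mul, h]

lemma mono_sub0 (q : ℂ) (i j : ℕ) :
    delOp q 0 (monomial (e i j) (1:ℂ)) = qNum q i • monomial (e (i-1) j) 1 := by
  cases i with
  | zero => simp [delOp_monomial, e_apply0, qNum_zero]
  | succ m => rw [delOp_monomial, e_apply0, e_sub0]; simp

lemma mono_sub1 (q : ℂ) (i j : ℕ) :
    delOp q 1 (monomial (e i j) (1:ℂ)) = qNum q j • monomial (e i (j-1)) 1 := by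
  cases j with
  | zero => simp [delOp_monomial, e_apply1, qNum_zero]
  | succ m => rw [delOp_monomial, e_apply1, e_sub1]; simp

lemma mulOp_delOp_sq0 (q : ℂ) (i j : ℕ) :
    ((mulOp 0 * delOp q 0 ^ 2) : Module.End ℂ (MvPolynomial (Fin 2) ℂ)) (monomial (e i j) (1:ℂ))
      = (qNum q i * qNum q (i-1)) • monomial (e (i-1) j) 1 := by
  rw [Module.End.mul_apply, pow_two, Module.End.mul_apply, mono_sub0, map_smul, mono_sub0,
    map_smul, map_smul]
  rcases i with _ | _ | m
  · simp [qNum_zero]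
  · simp [qNum_zero]
  · rw [mulOp, LinearMap.mulLeft_apply, X0_mul_mono]
    rw [smul_smul]; norm_num

lemma mulOp_delOp_sq1 (q : ℂ) (i j : ℕ) :
    ((mulOp 1 * delOp q 1 ^ 2) : Module.End ℂ (MvPolynomial (Fin 2) ℂ)) (monomial (e i j) (1:ℂ))
      = (qNum q j * qNum q (j-1)) • monomial (e i (j-1)) 1 := by
  rw [Module.End.mul_apply, pow_two, Module.End.mul_apply, mono_sub1, map_smul, mono_sub1,
    map_smul, map_smul]
  rcases j with _ | _ | m
  · simp [qNum_zero]
  · simp [qNum_zero]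
  · rw [mulOp, LinearMap.mulLeft_apply, X1_mul_mono]
    rw [smul_smul]; norm_num

lemma gammaOp_delOp0 (q : ℂ) (i j : ℕ) :
    ((gammaOp q 0 * delOp q 0) : Module.End ℂ (MvPolynomial (Fin 2) ℂ)) (monomial (e i j) (1:ℂ))
      = (q ^ (i-1) * qNum q i) • monomial (e (i-1) j) 1 := by
  rw [Module.End.mul_apply, mono_sub0, map_smul, gammaOp_monomial, e_apply0, smul_smul,
    mul_comm (qNum q i)]

lemma gammaOp_delOp1 (q : ℂ) (i j : ℕ) :
    ((gammaOp q 1 * delOp q 1) : Module.End ℂ (MvPolynomial (Fin 2) ℂ)) (monomial (e i j) (1:ℂ))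
      = (q ^ (j-1) * qNum q j) • monomial (e i (j-1)) 1 := by
  rw [Module.End.mul_apply, mono_sub1, map_smul, gammaOp_monomial, e_apply1, smul_smul,
    mul_comm (qNum q j)]

lemma gammaOp_sq1 (q : ℂ) (i j : ℕ) :
    ((gammaOp q⁻¹ 1 ^ 2) : Module.End ℂ (MvPolynomial (Fin 2) ℂ)) (monomial (e i j) (1:ℂ)) = (q⁻¹ ^ (2*j)) • monomial (e i j) 1 := by
  rw [pow_two, Module.End.mul_apply, gammaOp_monomial, map_smul, gammaOp_monomial, e_apply1,
    smul_smul, ← pow_add, two_mul]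

lemma key_id (q t : ℂ) (hq0 : q ≠ 0) (hqq : q - q⁻¹ ≠ 0) (ht : t ≠ 0) (i : ℕ) :
    t * (qNum q i * qNum q (i-1)) - (t - t⁻¹) / (q - q⁻¹) * (q ^ (i-1) * qNum q i)
      = -(qNum q i * qWt q t ((i:ℤ) - 1)) := by
  cases i with
  | zero => simp [qNum_zero]
  | succ m =>
      have h1 : ((m+1:ℕ):ℤ) - 1 = (m:ℤ) := by push_cast; ring
      have h2 : (q : ℂ) ^ (-(m:ℤ)) = q⁻¹ ^ m := by
        rw [zpow_neg, zpow_natCast, inv_pow]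
      rw [h1]
      simp only [Nat.add_sub_cancel, qNum, qWt, h2, zpow_natCast]
      generalize hu : q⁻¹ = u at hqq ⊢
      generalize hv : t⁻¹ = v
      field_simp
      ring

lemma Ehat_monomial (q t s : ℂ) (hq0 : q ≠ 0) (hqq : q - q⁻¹ ≠ 0) (ht : t ≠ 0) (hs : s ≠ 0)
    (i j : ℕ) :
    Ehat q t s (monomial (e i j) 1)
      = (-(s * q⁻¹ ^ (2*j) * qNum q i * qWt q t ((i:ℤ) - 1))) • monomial (e (i-1) j) 1
        + (-(qNum q j * qWt q s ((j:ℤ) - 1))) • monomial (e i (j-1)) 1 := by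
  rw [Ehat, LinearMap.sub_apply, LinearMap.add_apply, Module.End.mul_apply]
  simp only [LinearMap.smul_apply, gammaOp_sq1, map_smul, LinearMap.sub_apply,
    mulOp_delOp_sq0, mulOp_delOp_sq1, gammaOp_delOp0, gammaOp_delOp1, smul_smul]
  match_scalars
  · have := key_id q t hq0 hqq ht i
    linear_combination (s * q⁻¹^(2*j)) * this
  · have := key_id q s hq0 hqq hs j
    linear_combination this

/-- the recurrence coefficient -/
noncomputable def Co (q t s : ℂ) (n : ℕ) (a : ℕ → ℂ) (k : ℕ) : ℂ :=
  a k * qNum q k * qWt q s ((k : ℤ) - 1)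
    + a (k - 1) * s * q ^ (2 - 2 * (k : ℤ)) * qNum q (n - k + 1) * qWt q t ((n : ℤ) - k)

lemma Ehat_sum (q t s : ℂ) (hq0 : q ≠ 0) (hqq : q - q⁻¹ ≠ 0) (ht : t ≠ 0) (hs : s ≠ 0)
    (n : ℕ) (a : ℕ → ℂ) :
    Ehat q t s (∑ k ∈ Finset.range (n + 1), a k • monomial (e (n - k) k) 1)
      = ∑ i ∈ Finset.range n, (-(Co q t s n a (i+1))) • monomial (e (n - (i+1)) i) 1 := by
  rw [map_sum]
  simp only [map_smul, Ehat_monomial q t s hq0 hqq ht hs, smul_add, smul_smul]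
  rw [Finset.sum_add_distrib, Finset.sum_range_succ, Finset.sum_range_succ']
  simp only [Nat.sub_self, qNum_zero, mul_zero, zero_mul, mul_neg, neg_zero, zero_smul,
    add_zero, zero_add]
  rw [← Finset.sum_add_distrib]
  refine Finset.sum_congr rfl fun i hi => ?_
  have hin : i < n := Finset.mem_range.mp hi
  have hsub : n - i - 1 = n - (i+1) := by omega
  have hsucc : i + 1 - 1 = i := by omega
  rw [hsub, hsucc, ← add_smul]
  congr 1
  have h1 : n - i = n - (i+1) + 1 := by omega
  have h2 : ((n - (i+1) + 1 : ℕ) : ℤ) - 1 = (n : ℤ) - ((i + 1 : ℕ) : ℤ) := by omega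
  have h3 : (q : ℂ)⁻¹ ^ (2*i) = q ^ (2 - 2*(((i:ℕ) + 1 : ℕ) : ℤ)) := by
    have h4 : (2 : ℤ) - 2*(((i:ℕ) + 1 : ℕ) : ℤ) = -((2*i : ℕ) : ℤ) := by push_cast; ring
    rw [h4, zpow_neg, zpow_natCast, inv_pow]
  rw [Co, hsucc, h1, h2, h3]
  ring

lemma Ehat_eq_zero_iff (q t s : ℂ) (hq0 : q ≠ 0) (hqq : q - q⁻¹ ≠ 0) (ht : t ≠ 0) (hs : s ≠ 0)
    (n : ℕ) (a : ℕ → ℂ) :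
    Ehat q t s (∑ k ∈ Finset.range (n + 1), a k • monomial (e (n - k) k) 1) = 0 ↔
      ∀ k, 1 ≤ k → k ≤ n → Co q t s n a k = 0 := by
  rw [Ehat_sum q t s hq0 hqq ht hs n a]
  constructor
  · intro h k hk1 hkn
    have hc := congrArg (coeff (e (n - k) (k - 1))) h
    rw [coeff_sum, coeff_zero] at hc
    rw [Finset.sum_eq_single (k - 1)] at hc
    · rw [coeff_smul, show k - 1 + 1 = k by omega, coeff_monomial, if_pos rfl] at hc
      simpa using hc
    · intro i hi hne
      rw [coeff_smul, coeff_monomial, if_neg, smul_zero]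
      intro hcontra
      exact hne (by have := (e_inj hcontra).2; omega)
    · intro hmem
      exact absurd (Finset.mem_range.mpr (by omega)) hmem
  · intro h
    apply Finset.sum_eq_zero
    intro i hi
    rw [h (i+1) (by omega) (by have := Finset.mem_range.mp hi; omega), neg_zero, zero_smul]

lemma Vn_mem (n : ℕ) (w : MvPolynomial (Fin 2) ℂ) (hw : w ∈ Vn n) :
    ∃ a : ℕ → ℂ, w = ∑ k ∈ Finset.range (n + 1), a k • monomial (e (n - k) k) 1 := by
  have hspan : Vn n
      = Submodule.span ℂ (Set.range fun k : Fin (n+1) => monomial (e (n - (k:ℕ)) (k:ℕ)) (1:ℂ)) := by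
    apply le_antisymm <;> rw [Vn, Submodule.span_le]
    · rintro f ⟨k, hk, rfl⟩
      exact Submodule.subset_span ⟨⟨k, by omega⟩, by rw [X_pow_mul_eq]⟩
    · rintro f ⟨i, rfl⟩
      exact Submodule.subset_span ⟨(i : ℕ), by omega, (X_pow_mul_eq _ _).symm⟩
  rw [hspan, Submodule.mem_span_range_iff_exists_fun] at hw
  obtain ⟨c, hc⟩ := hw
  refine ⟨fun k => if h : k < n + 1 then c ⟨k, h⟩ else 0, ?_⟩
  rw [← hc, ← Fin.sum_univ_eq_sum_range (fun k => (if h : k < n + 1 then c ⟨k, h⟩ else 0) • monomial (e (n - k) k) (1:ℂ)) (n+1)]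
  refine Finset.sum_congr rfl fun i _ => ?_
  rw [dif_pos i.isLt]

lemma sub_inv_ne_zero (q : ℂ) (hq0 : q ≠ 0) (hq : ∀ k : ℕ, 0 < k → q ^ k ≠ 1) :
    q - q⁻¹ ≠ 0 := by
  intro h
  apply hq 2 (by omega)
  have h' : q = q⁻¹ := by linear_combination h
  calc q ^ 2 = q * q := sq q
  _ = q * q⁻¹ := by rw [← h']
  _ = 1 := mul_inv_cancel₀ hq0

lemma qNum_ne_zero (q : ℂ) (hq0 : q ≠ 0) (hq : ∀ k : ℕ, 0 < k → q ^ k ≠ 1) (k : ℕ) (hk : 0 < k) :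
    qNum q k ≠ 0 := by
  have hqq : q - q⁻¹ ≠ 0 := sub_inv_ne_zero q hq0 hq
  rw [qNum, div_ne_zero_iff]
  refine ⟨?_, hqq⟩
  intro h
  apply hq (2*k) (by omega)
  have h1 : q ^ k = q⁻¹ ^ k := by linear_combination h
  have h2 : q ^ k * q⁻¹ ^ k = 1 := by
    rw [inv_pow, mul_inv_cancel₀ (pow_ne_zero k hq0)]
  calc q ^ (2*k) = q ^ k * q ^ k := by rw [two_mul, pow_add]
  _ = 1 := by rw [h1] at h2 ⊢; exact h2

lemma qWt_ne_zero (q t : ℂ) (hq0 : q ≠ 0) (hqq : q - q⁻¹ ≠ 0) (ht : t ≠ 0)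
    (hT : ∀ m : ℕ, t ^ 2 ≠ q ^ (2 * m)) (m : ℕ) : qWt q t (m : ℤ) ≠ 0 := by
  rw [qWt, div_ne_zero_iff]
  refine ⟨?_, hqq⟩
  intro h
  apply hT m
  have h2 : (q:ℂ) ^ (-(m:ℤ)) = (q ^ m)⁻¹ := by rw [zpow_neg, zpow_natCast]
  rw [h2, zpow_natCast] at h
  have h3 : t * (q ^ m)⁻¹ = t⁻¹ * q ^ m := by linear_combination h
  have hqm : (q:ℂ) ^ m ≠ 0 := pow_ne_zero m hq0
  field_simp at h3
  calc t ^ 2 = t * t := sq t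
  _ = q ^ m * q ^ m := by linear_combination h3
  _ = q ^ (2*m) := by rw [two_mul, pow_add]

lemma Co_sub (q t s : ℂ) (n : ℕ) (a b : ℕ → ℂ) (c : ℂ) (k : ℕ) :
    Co q t s n (fun j => a j - c * b j) k = Co q t s n a k - c * Co q t s n b k := by
  simp only [Co]; ring

lemma dim_one (q t s : ℂ) (hq0 : q ≠ 0) (hqq : q - q⁻¹ ≠ 0) (ht : t ≠ 0) (hs : s ≠ 0)
    (n : ℕ) (b : ℕ → ℂ) (k₀ : ℕ) (hk₀ : k₀ ≤ n) (hb : b k₀ = 1)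
    (hsol : ∀ k, 1 ≤ k → k ≤ n → Co q t s n b k = 0)
    (huniq : ∀ a : ℕ → ℂ, (∀ k, 1 ≤ k → k ≤ n → Co q t s n a k = 0) → a k₀ = 0 →
      ∀ k, k ≤ n → a k = 0) :
    Module.finrank ℂ (Vn n ⊓ LinearMap.ker (Ehat q t s) : Submodule ℂ _) = 1 := by
  set v₀ : MvPolynomial (Fin 2) ℂ := ∑ k ∈ Finset.range (n + 1), b k • monomial (e (n - k) k) 1
    with hv₀
  have hcoeff : ∀ (a : ℕ → ℂ) (j : ℕ), j ≤ n →
      coeff (e (n - j) j) (∑ k ∈ Finset.range (n + 1), a k • monomial (e (n - k) k) 1) = a j := by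
    intro a j hj
    rw [coeff_sum, Finset.sum_eq_single j]
    · rw [coeff_smul, coeff_monomial, if_pos rfl, smul_eq_mul, mul_one]
    · intro i hi hne
      rw [coeff_smul, coeff_monomial, if_neg, smul_zero]
      intro hcontra
      exact hne ((e_inj hcontra).2)
    · intro hmem
      exact absurd (Finset.mem_range.mpr (by omega)) hmem
  have hv₀ne : v₀ ≠ 0 := by
    intro h
    have := hcoeff b k₀ hk₀
    rw [← hv₀, h, coeff_zero, hb] at this
    exact one_ne_zero this.symm
  have hv₀mem : v₀ ∈ Vn n ⊓ LinearMap.ker (Ehat q t s) := by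
    constructor
    · apply Submodule.sum_mem
      intro k hk
      apply Submodule.smul_mem
      apply Submodule.subset_span
      exact ⟨k, by have := Finset.mem_range.mp hk; omega, (X_pow_mul_eq _ _).symm⟩
    · simp only [SetLike.mem_coe, LinearMap.mem_ker]
      exact (Ehat_eq_zero_iff q t s hq0 hqq ht hs n b).mpr hsol
  have hspan : (Vn n ⊓ LinearMap.ker (Ehat q t s) : Submodule ℂ _) = ℂ ∙ v₀ := by
    apply le_antisymm
    · rintro w ⟨hw1, hw2⟩
      obtain ⟨a, rfl⟩ := Vn_mem n w hw1
      rw [SetLike.mem_coe, LinearMap.mem_ker, Ehat_eq_zero_iff q t s hq0 hqq ht hs n a] at hw2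
      have key : ∀ k, k ≤ n → a k - a k₀ * b k = 0 := by
        apply huniq
        · intro k h1 h2
          rw [Co_sub, hw2 k h1 h2, hsol k h1 h2, mul_zero, sub_zero]
        · rw [hb, mul_one, sub_self]
      rw [Submodule.mem_span_singleton]
      refine ⟨a k₀, ?_⟩
      rw [hv₀, Finset.smul_sum]
      refine Finset.sum_congr rfl fun k hk => ?_
      have hkn : k ≤ n := by have := Finset.mem_range.mp hk; omega
      have := key k hkn
      rw [smul_smul]
      congr 1
      linear_combination -this
    · rw [Submodule.span_singleton_le_iff_mem]
      exact hv₀mem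
  rw [hspan, finrank_span_singleton hv₀ne]

noncomputable def bS (q t s : ℂ) (n : ℕ) : ℕ → ℂ
  | 0 => 1
  | k + 1 => -(bS q t s n k * s * q ^ (2 - 2 * ((k+1 : ℕ) : ℤ)) * qNum q (n - (k+1) + 1)
        * qWt q t ((n : ℤ) - ((k+1 : ℕ) : ℤ))) / (qNum q (k+1) * qWt q s (((k+1 : ℕ) : ℤ) - 1))

noncomputable def bT (q t s : ℂ) (n : ℕ) : ℕ → ℂ
  | 0 => 1
  | m + 1 => -(bT q t s n m * qNum q (n - m) * qWt q s (((n - m : ℕ) : ℤ) - 1))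
      / (s * q ^ (2 - 2 * ((n - m : ℕ) : ℤ)) * qNum q (m+1) * qWt q t ((m : ℕ) : ℤ))

lemma finrank_case_s (q t s : ℂ) (hq0 : q ≠ 0) (hqq : q - q⁻¹ ≠ 0)
    (hq : ∀ k : ℕ, 0 < k → q ^ k ≠ 1) (ht : t ≠ 0) (hs : s ≠ 0)
    (hS : ∀ m : ℕ, s ^ 2 ≠ q ^ (2 * m)) (n : ℕ) :
    Module.finrank ℂ (Vn n ⊓ LinearMap.ker (Ehat q t s) : Submodule ℂ _) = 1 := by
  have hWs : ∀ m : ℕ, qWt q s (((m+1 : ℕ) : ℤ) - 1) ≠ 0 := by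
    intro m
    have hc : ((m+1 : ℕ) : ℤ) - 1 = ((m : ℕ) : ℤ) := by push_cast; ring
    rw [hc]
    exact qWt_ne_zero q s hq0 hqq hs hS m
  apply dim_one q t s hq0 hqq ht hs n (bS q t s n) 0 (Nat.zero_le n) rfl
  · intro k hk1 hkn
    obtain ⟨m, rfl⟩ : ∃ m, k = m + 1 := ⟨k - 1, by omega⟩
    rw [Co]
    simp only [Nat.add_sub_cancel]
    have hnum := qNum_ne_zero q hq0 hq (m+1) (by omega)
    have hws := hWs m
    have hb : bS q t s n (m+1) * (qNum q (m+1) * qWt q s (((m+1 : ℕ) : ℤ) - 1))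
        = -(bS q t s n m * s * q ^ (2 - 2 * ((m+1 : ℕ) : ℤ)) * qNum q (n - (m+1) + 1)
            * qWt q t ((n : ℤ) - ((m+1 : ℕ) : ℤ))) := by
      rw [show bS q t s n (m+1) = -(bS q t s n m * s * q ^ (2 - 2 * ((m+1 : ℕ) : ℤ))
          * qNum q (n - (m+1) + 1) * qWt q t ((n : ℤ) - ((m+1 : ℕ) : ℤ)))
          / (qNum q (m+1) * qWt q s (((m+1 : ℕ) : ℤ) - 1)) from rfl]
      exact div_mul_cancel₀ _ (mul_ne_zero hnum hws)
    linear_combination hb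
  · intro a hrec ha0 k
    induction k with
    | zero => intro _; exact ha0
    | succ m ih =>
        intro hk
        have h1 : a m = 0 := ih (by omega)
        have h2 := hrec (m+1) (by omega) hk
        rw [Co] at h2
        simp only [Nat.add_sub_cancel, h1, zero_mul, add_zero] at h2
        have h2' : a (m+1) * (qNum q (m+1) * qWt q s (((m+1:ℕ):ℤ) - 1)) = 0 := by
          linear_combination h2
        have hne : qNum q (m+1) * qWt q s (((m+1:ℕ):ℤ) - 1) ≠ 0 :=
          mul_ne_zero (qNum_ne_zero q hq0 hq (m+1) (by omega)) (hWs m)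
        exact (mul_eq_zero.mp h2').resolve_right hne

lemma finrank_case_t (q t s : ℂ) (hq0 : q ≠ 0) (hqq : q - q⁻¹ ≠ 0)
    (hq : ∀ k : ℕ, 0 < k → q ^ k ≠ 1) (ht : t ≠ 0) (hs : s ≠ 0)
    (hT : ∀ m : ℕ, t ^ 2 ≠ q ^ (2 * m)) (n : ℕ) :
    Module.finrank ℂ (Vn n ⊓ LinearMap.ker (Ehat q t s) : Submodule ℂ _) = 1 := by
  have hWt : ∀ m : ℕ, qWt q t ((m : ℕ) : ℤ) ≠ 0 := qWt_ne_zero q t hq0 hqq ht hT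
  apply dim_one q t s hq0 hqq ht hs n (fun j => bT q t s n (n - j)) n le_rfl
    (by show bT q t s n (n - n) = 1; rw [Nat.sub_self]; simp [bT])
  · intro k hk1 hkn
    rw [Co]
    have e1 : n - (k - 1) = (n - k) + 1 := by omega
    have e2 : n - (n - k) = k := by omega
    have e3 : (((n - (n-k)) : ℕ) : ℤ) - 1 = (k : ℤ) - 1 := by omega
    have e4 : (2 : ℤ) - 2 * (((n - (n-k)) : ℕ) : ℤ) = 2 - 2 * (k : ℤ) := by omega
    have e5 : (((n - k) : ℕ) : ℤ) = (n : ℤ) - (k : ℤ) := by omega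
    simp only [e1]
    have hnum := qNum_ne_zero q hq0 hq ((n-k)+1) (by omega)
    have hwt := hWt (n - k)
    have hDne : s * q ^ (2 - 2 * ((n - (n-k) : ℕ) : ℤ)) * qNum q ((n-k)+1)
        * qWt q t (((n-k : ℕ) : ℤ)) ≠ 0 :=
      mul_ne_zero (mul_ne_zero (mul_ne_zero hs (zpow_ne_zero _ hq0)) hnum) hwt
    have hb : bT q t s n ((n-k)+1) * (s * q ^ (2 - 2 * ((n - (n-k) : ℕ) : ℤ))
          * qNum q ((n-k)+1) * qWt q t (((n-k : ℕ) : ℤ)))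
        = -(bT q t s n (n-k) * qNum q (n - (n-k)) * qWt q s (((n - (n-k) : ℕ) : ℤ) - 1)) := by
      rw [show bT q t s n ((n-k)+1) = -(bT q t s n (n-k) * qNum q (n - (n-k))
            * qWt q s (((n - (n-k) : ℕ) : ℤ) - 1))
          / (s * q ^ (2 - 2 * ((n - (n-k) : ℕ) : ℤ)) * qNum q ((n-k)+1)
            * qWt q t (((n-k : ℕ) : ℤ))) from rfl]
      exact div_mul_cancel₀ _ hDne
    rw [e3, e4, e2, e5] at hb
    linear_combination hb
  · intro a hrec han k
    have H : ∀ j, j ≤ n → a (n - j) = 0 := by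
      intro j
      induction j with
      | zero => intro _; simpa using han
      | succ m ih =>
          intro hj
          have h1 : a (n - m) = 0 := ih (by omega)
          have h2 := hrec (n - m) (by omega) (by omega)
          rw [Co] at h2
          have h3 : n - m - 1 = n - (m+1) := by omega
          rw [h3, h1] at h2
          simp only [zero_mul, add_zero, zero_add] at h2
          have e6 : n - (n - m) + 1 = m + 1 := by omega
          have e7 : (n : ℤ) - ((n - m : ℕ) : ℤ) = ((m : ℕ) : ℤ) := by omega
          rw [e6, e7] at h2
          have hne : s * q ^ ((2:ℤ) - 2 * ((n - m : ℕ) : ℤ)) * qNum q (m+1)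
              * qWt q t ((m : ℕ) : ℤ) ≠ 0 :=
            mul_ne_zero (mul_ne_zero (mul_ne_zero hs (zpow_ne_zero _ hq0))
              (qNum_ne_zero q hq0 hq (m+1) (by omega))) (hWt m)
          have h2' : a (n - (m+1)) * (s * q ^ ((2:ℤ) - 2 * ((n - m : ℕ) : ℤ)) * qNum q (m+1)
              * qWt q t ((m : ℕ) : ℤ)) = 0 := by
            linear_combination h2
          exact (mul_eq_zero.mp h2').resolve_right hne
    intro hk
    have := H (n - k) (by omega)
    rwa [show n - (n - k) = k from by omega] at this

end Stmt19

open Stmt19 in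
/-- (1) `v = Σ_{k=0}^n a_k x^{n−k} y^k` is a singular vector
(`Ê_{λ,μ} v = 0`) iff the coefficients satisfy the recurrence
`a_k·[k]_q·[μ−k+1]_q + a_{k−1}·s·q^{2−2k}·[n−k+1]_q·[λ−n+k]_q = 0` for `k = 1,…,n`;
(2) if `t² ∉ q^{2ℕ₀}` or `s² ∉ q^{2ℕ₀}`, the space of such singular vectors of weight
`q^{(λ+μ−2n)ω}` is one-dimensional. -/
theorem singular_vectors_tensor_Verma (q : ℂ) (hq0 : q ≠ 0)
    (hq : ∀ k : ℕ, 0 < k → q ^ k ≠ 1) (t s : ℂ) (ht : t ≠ 0) (hs : s ≠ 0) :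
    (∀ (n : ℕ) (a : ℕ → ℂ),
      Ehat q t s (∑ k ∈ Finset.range (n + 1), a k • (X 0 ^ (n - k) * X 1 ^ k)) = 0 ↔
        ∀ k : ℕ, 1 ≤ k → k ≤ n →
          a k * qNum q k * qWt q s ((k : ℤ) - 1)
            + a (k - 1) * s * q ^ (2 - 2 * (k : ℤ)) * qNum q (n - k + 1)
              * qWt q t ((n : ℤ) - k) = 0) ∧
    ((∀ m : ℕ, t ^ 2 ≠ q ^ (2 * m)) ∨ (∀ m : ℕ, s ^ 2 ≠ q ^ (2 * m)) →
      ∀ n : ℕ, Module.finrank ℂ (Vn n ⊓ LinearMap.ker (Ehat q t s) : Submodule ℂ _) = 1) := by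
  have hqq : q - q⁻¹ ≠ 0 := sub_inv_ne_zero q hq0 hq
  constructor
  · intro n a
    have hv : ∑ k ∈ Finset.range (n + 1), a k • ((X 0 : MvPolynomial (Fin 2) ℂ) ^ (n - k) * X 1 ^ k)
        = ∑ k ∈ Finset.range (n + 1), a k • monomial (e (n - k) k) 1 := by
      refine Finset.sum_congr rfl fun k _ => ?_
      rw [X_pow_mul_eq]
    rw [hv, Ehat_eq_zero_iff q t s hq0 hqq ht hs n a]
    simp only [Co]
  · rintro (hT | hS) n
    · exact finrank_case_t q t s hq0 hqq hq ht hs hT n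
    · exact finrank_case_s q t s hq0 hqq hq ht hs hS n
end
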